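/- arXiv:0911.4860 — 2 statements merged into one kernel-verified Lean document; each statement's English description precedes it below -/
import Mathlib

section
/- Let X be a Banach space with Schauder basis, ‖R_n‖ = 1 for all n, Φ_1 as above, and a ∈ X fixed. Define h : ℝ × X → X by h(t,x) = 2t Φ_1(x/t²) for t > 0, h(0,x) = 0, and h(t,x) = 2t Φ_1((x−a)/t²) for t < 0. Then h is continuous and satisfies ‖h(t,x)‖ ≤ 4|t| for all (t,x) ∈ ℝ × X. -/
open Filter Finset Topology

/-- The tail projection `Q_{n+1} = I - P_n` associated to a Schauder basis system,
where `P_n x = ∑_{k<n} f_k(x) e_k`.  Thus `tailProj f e n` is the paper's `Q_{n+1}`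
and also its `R_n`. -/
noncomputable def tailProj {X : Type*} [NormedAddCommGroup X] [NormedSpace ℝ X]
    (f : ℕ → X →L[ℝ] ℝ) (e : ℕ → X) (n : ℕ) : X →L[ℝ] X :=
  ContinuousLinearMap.id ℝ X - ∑ k ∈ Finset.range n, (f k).smulRight (e k)

/-- The piecewise-linear cutoff function `φ_r`: equal to `1` on `[-r, r]`,
`0` outside `(-2r, 2r)`, and `2 - |t|/r` in between. -/
noncomputable def phi (r t : ℝ) : ℝ :=
  if |t| ≤ r then 1 else if |t| ≤ 2 * r then 2 - |t| / r else 0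

lemma phi_one_eq (t : ℝ) : phi 1 t = min 1 (max 0 (2 - |t|)) := by
  unfold phi
  have h0 : (0:ℝ) ≤ |t| := abs_nonneg t
  split_ifs with h1 h2 <;> try push_neg at *
  · rw [max_eq_right (by linarith), min_eq_left (by linarith)]
  · rw [div_one, max_eq_right (by linarith), min_eq_right (by linarith)]
  · rw [max_eq_left (by linarith), min_eq_right (by linarith)]

lemma phi_one_cont : Continuous (phi 1) := by
  simp only [funext phi_one_eq]; fun_prop

lemma phi_one_nonneg (t : ℝ) : 0 ≤ phi 1 t := by
  rw [phi_one_eq]; positivity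

lemma phi_one_le_one (t : ℝ) : phi 1 t ≤ 1 := by
  rw [phi_one_eq]; exact min_le_left _ _

lemma phi_one_anti {s t : ℝ} (hs : 0 ≤ s) (hst : s ≤ t) : phi 1 t ≤ phi 1 s := by
  rw [phi_one_eq, phi_one_eq, abs_of_nonneg hs, abs_of_nonneg (hs.trans hst)]
  exact min_le_min le_rfl (max_le_max le_rfl (by linarith))

lemma phi_one_pos_le {t : ℝ} (ht : 0 ≤ t) (h : 0 < phi 1 t) : t ≤ 2 := by
  rw [phi_one_eq, abs_of_nonneg ht] at h
  by_contra hc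
  push_neg at hc
  rw [max_eq_left (by linarith)] at h
  simp at h

lemma phi_one_of_le {t : ℝ} (ht : |t| ≤ 1) : phi 1 t = 1 := by
  unfold phi; rw [if_pos ht]

section TP
variable {X : Type*} [NormedAddCommGroup X] [NormedSpace ℝ X]
  (f : ℕ → X →L[ℝ] ℝ) (e : ℕ → X)

lemma tailProj_apply (n : ℕ) (x : X) :
    tailProj f e n x = x - ∑ k ∈ Finset.range n, f k x • e k := by
  simp [tailProj, ContinuousLinearMap.sub_apply, ContinuousLinearMap.sum_apply]

lemma tailProj_zero (x : X) : tailProj f e 0 x = x := by simp [tailProj_apply]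

lemma tailProj_succ (n : ℕ) (x : X) :
    tailProj f e (n+1) x = tailProj f e n x - f n x • e n := by
  rw [tailProj_apply, tailProj_apply, Finset.sum_range_succ]; abel

lemma f_apply_tailProj (hbi : ∀ k j, f k (e j) = if k = j then (1:ℝ) else 0)
    (k n : ℕ) (x : X) :
    f k (tailProj f e n x) = if k < n then 0 else f k x := by
  rw [tailProj_apply, map_sub, map_sum]
  simp only [map_smul, smul_eq_mul, hbi, mul_ite, mul_one, mul_zero]
  have : (∑ j ∈ Finset.range n, if k = j then f j x else 0)
      = if k ∈ Finset.range n then f k x else 0 := Finset.sum_ite_eq _ _ _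
  rw [this]; simp only [Finset.mem_range]
  split_ifs <;> simp

lemma tailProj_comp (hbi : ∀ k j, f k (e j) = if k = j then (1:ℝ) else 0)
    (n : ℕ) (x : X) :
    tailProj f e (n+1) (tailProj f e n x) = tailProj f e (n+1) x := by
  rw [tailProj_apply f e (n+1) (tailProj f e n x)]
  simp only [f_apply_tailProj f e hbi]
  rw [Finset.sum_range_succ]
  have h1 : ∑ k ∈ Finset.range n, (if k < n then (0:ℝ) else f k x) • e k = 0 := by
    apply Finset.sum_eq_zero
    intro k hk
    rw [if_pos (Finset.mem_range.1 hk), zero_smul]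
  rw [h1, if_neg (lt_irrefl n), zero_add, tailProj_succ]

lemma tailProj_norm_anti (hbi : ∀ k j, f k (e j) = if k = j then (1:ℝ) else 0)
    (hR : ∀ n, 1 ≤ n → ‖tailProj f e n‖ = 1) (x : X) :
    Antitone fun n => ‖tailProj f e n x‖ := by
  apply antitone_nat_of_succ_le
  intro n
  calc ‖tailProj f e (n+1) x‖ = ‖tailProj f e (n+1) (tailProj f e n x)‖ := by
        rw [tailProj_comp f e hbi]
    _ ≤ ‖tailProj f e (n+1)‖ * ‖tailProj f e n x‖ := (tailProj f e (n+1)).le_opNorm _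
    _ = ‖tailProj f e n x‖ := by rw [hR (n+1) (by omega), one_mul]

end TP

/-- The map `h(t,x) = 2t Φ₁(x/t²)` for `t > 0`, `h(0,x) = 0`,
`h(t,x) = 2t Φ₁((x-a)/t²)` for `t < 0`, is continuous and `‖h(t,x)‖ ≤ 4|t|`. -/
theorem h_continuous_and_bounded
    {X : Type*} [NormedAddCommGroup X] [NormedSpace ℝ X] [CompleteSpace X]
    (e : ℕ → X) (f : ℕ → X →L[ℝ] ℝ)
    (hexp : ∀ x : X, Tendsto (fun n => ∑ k ∈ Finset.range n, f k x • e k) atTop (𝓝 x))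
    (hbi : ∀ k j, f k (e j) = if k = j then (1 : ℝ) else 0)
    (hR : ∀ n, 1 ≤ n → ‖tailProj f e n‖ = 1)
    (Φ : X → X)
    (hΦ : ∀ x : X, Tendsto
      (fun n => ∑ k ∈ Finset.range n, phi 1 ‖tailProj f e k x‖ • (f k x • e k))
      atTop (𝓝 (Φ x)))
    (a : X)
    (h : ℝ × X → X)
    (hdef : ∀ p : ℝ × X, h p =
      if 0 < p.1 then (2 * p.1) • Φ ((p.1 ^ 2)⁻¹ • p.2)
      else if p.1 < 0 then (2 * p.1) • Φ ((p.1 ^ 2)⁻¹ • (p.2 - a))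
      else 0) :
    Continuous h ∧ ∀ (t : ℝ) (x : X), ‖h (t, x)‖ ≤ 4 * |t| := by
  have hanti : ∀ x : X, Antitone fun n => ‖tailProj f e n x‖ :=
    tailProj_norm_anti f e hbi hR
  have hQtend : ∀ x : X, Tendsto (fun n => tailProj f e n x) atTop (𝓝 0) := by
    intro x
    have := (tendsto_const_nhds (x := x) (f := atTop)).sub (hexp x)
    simpa [tailProj_apply, sub_self] using this
  -- the key Abel-summation estimate
  have key : ∀ (x : X) (n : ℕ),
      ‖(∑ k ∈ Finset.range (n+1), phi 1 ‖tailProj f e k x‖ • (f k x • e k))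
          + phi 1 ‖tailProj f e n x‖ • tailProj f e (n+1) x‖
        ≤ 2 * phi 1 ‖tailProj f e n x‖ := by
    intro x n
    induction n with
    | zero =>
      have h1 : (∑ k ∈ Finset.range 1, phi 1 ‖tailProj f e k x‖ • (f k x • e k))
          + phi 1 ‖tailProj f e 0 x‖ • tailProj f e 1 x
          = phi 1 ‖tailProj f e 0 x‖ • x := by
        rw [Finset.sum_range_one, tailProj_succ f e 0 x, tailProj_zero, smul_sub]
        abel
      rw [h1, tailProj_zero, norm_smul, Real.norm_eq_abs,
        abs_of_nonneg (phi_one_nonneg _)]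
      rcases eq_or_lt_of_le (phi_one_nonneg ‖x‖) with hc | hc
      · rw [← hc]; simp
      · have := phi_one_pos_le (norm_nonneg x) hc
        nlinarith [phi_one_le_one ‖x‖]
    | succ n ih =>
      have hstep : (∑ k ∈ Finset.range (n+2), phi 1 ‖tailProj f e k x‖ • (f k x • e k))
          + phi 1 ‖tailProj f e (n+1) x‖ • tailProj f e (n+2) x
          = ((∑ k ∈ Finset.range (n+1), phi 1 ‖tailProj f e k x‖ • (f k x • e k))
              + phi 1 ‖tailProj f e n x‖ • tailProj f e (n+1) x)
            + (phi 1 ‖tailProj f e (n+1) x‖ - phi 1 ‖tailProj f e n x‖)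
                • tailProj f e (n+1) x := by
        rw [Finset.sum_range_succ, tailProj_succ f e (n+1) x, smul_sub, sub_smul]
        abel
      rw [hstep]
      have hmono : phi 1 ‖tailProj f e n x‖ ≤ phi 1 ‖tailProj f e (n+1) x‖ :=
        phi_one_anti (norm_nonneg _) (hanti x (Nat.le_succ n))
      have h2 : ‖(phi 1 ‖tailProj f e (n+1) x‖ - phi 1 ‖tailProj f e n x‖)
            • tailProj f e (n+1) x‖
          ≤ 2 * (phi 1 ‖tailProj f e (n+1) x‖ - phi 1 ‖tailProj f e n x‖) := by
        rw [norm_smul, Real.norm_eq_abs, abs_of_nonneg (by linarith)]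
        rcases eq_or_lt_of_le hmono with hc | hc
        · rw [hc]; simp
        · have hpos : 0 < phi 1 ‖tailProj f e (n+1) x‖ :=
            lt_of_le_of_lt (phi_one_nonneg _) hc
          have := phi_one_pos_le (norm_nonneg (tailProj f e (n+1) x)) hpos
          nlinarith
      calc _ ≤ ‖(∑ k ∈ Finset.range (n+1), phi 1 ‖tailProj f e k x‖ • (f k x • e k))
              + phi 1 ‖tailProj f e n x‖ • tailProj f e (n+1) x‖
            + ‖(phi 1 ‖tailProj f e (n+1) x‖ - phi 1 ‖tailProj f e n x‖)
                • tailProj f e (n+1) x‖ := norm_add_le _ _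
        _ ≤ 2 * phi 1 ‖tailProj f e (n+1) x‖ := by linarith
  -- the bound on Φ
  have hΦ_bound : ∀ x : X, ‖Φ x‖ ≤ 2 := by
    intro x
    have hA : Tendsto
        (fun n => ‖∑ k ∈ Finset.range (n+1), phi 1 ‖tailProj f e k x‖ • (f k x • e k)‖)
        atTop (𝓝 ‖Φ x‖) := ((hΦ x).norm).comp (tendsto_add_atTop_nat 1)
    have hB : Tendsto (fun n => 2 + ‖tailProj f e (n+1) x‖) atTop (𝓝 2) := by
      have := (tendsto_const_nhds (x := (2:ℝ)) (f := atTop)).add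
        (((hQtend x).norm).comp (tendsto_add_atTop_nat 1))
      simpa using this
    refine le_of_tendsto_of_tendsto' hA hB ?_
    intro n
    have hc1 : phi 1 ‖tailProj f e n x‖ ≤ 1 := phi_one_le_one _
    have hc0 : 0 ≤ phi 1 ‖tailProj f e n x‖ := phi_one_nonneg _
    have h3 : ‖phi 1 ‖tailProj f e n x‖ • tailProj f e (n+1) x‖
        ≤ ‖tailProj f e (n+1) x‖ := by
      rw [norm_smul, Real.norm_eq_abs, abs_of_nonneg hc0]
      nlinarith [norm_nonneg (tailProj f e (n+1) x)]
    calc ‖∑ k ∈ Finset.range (n+1), phi 1 ‖tailProj f e k x‖ • (f k x • e k)‖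
        ≤ ‖(∑ k ∈ Finset.range (n+1), phi 1 ‖tailProj f e k x‖ • (f k x • e k))
            + phi 1 ‖tailProj f e n x‖ • tailProj f e (n+1) x‖
          + ‖phi 1 ‖tailProj f e n x‖ • tailProj f e (n+1) x‖ := by
          have heq2 : (∑ k ∈ Finset.range (n+1), phi 1 ‖tailProj f e k x‖ • (f k x • e k))
              = ((∑ k ∈ Finset.range (n+1), phi 1 ‖tailProj f e k x‖ • (f k x • e k))
                  + phi 1 ‖tailProj f e n x‖ • tailProj f e (n+1) x)
                - phi 1 ‖tailProj f e n x‖ • tailProj f e (n+1) x :=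
            (add_sub_cancel_right _ _).symm
          conv_lhs => rw [heq2]
          exact norm_sub_le _ _
      _ ≤ 2 + ‖tailProj f e (n+1) x‖ := by
          have := key x n
          have hle : 2 * phi 1 ‖tailProj f e n x‖ ≤ 2 := by linarith
          linarith
  -- continuity of Φ
  have hΦ_cont : Continuous Φ := by
    rw [continuous_iff_continuousAt]
    intro x₀
    obtain ⟨N0, hN0⟩ := (Metric.tendsto_atTop.1 (hQtend x₀)) (1/2) (by norm_num)
    set N := max N0 1 with hNdef
    have hN1 : 1 ≤ N := le_max_right _ _
    have hxN : ‖tailProj f e N x₀‖ < 1/2 := by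
      simpa [dist_zero_right] using hN0 N (le_max_left _ _)
    have hone : ∀ x ∈ Metric.ball x₀ (1/2), ∀ k, N ≤ k →
        phi 1 ‖tailProj f e k x‖ = 1 := by
      intro x hx k hk
      apply phi_one_of_le
      rw [abs_of_nonneg (norm_nonneg _)]
      have h1 : ‖tailProj f e k x₀‖ ≤ ‖tailProj f e N x₀‖ := hanti x₀ hk
      have h2 : ‖tailProj f e k x - tailProj f e k x₀‖ ≤ ‖x - x₀‖ := by
        rw [← map_sub]
        calc ‖tailProj f e k (x - x₀)‖ ≤ ‖tailProj f e k‖ * ‖x - x₀‖ :=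
              (tailProj f e k).le_opNorm _
          _ = ‖x - x₀‖ := by rw [hR k (le_trans hN1 hk), one_mul]
      have h3 : ‖tailProj f e k x‖ ≤ ‖tailProj f e k x₀‖
          + ‖tailProj f e k x - tailProj f e k x₀‖ := by
        have := norm_add_le (tailProj f e k x₀) (tailProj f e k x - tailProj f e k x₀)
        simpa using this
      have hx' : ‖x - x₀‖ < 1/2 := by
        rw [← dist_eq_norm]; exact Metric.mem_ball.1 hx
      linarith
    set g : X → X := fun x =>
      (∑ k ∈ Finset.range N, phi 1 ‖tailProj f e k x‖ • (f k x • e k))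
        + tailProj f e N x with hgdef
    have hg_cont : Continuous g := by
      apply Continuous.add
      · apply continuous_finset_sum
        intro k _
        exact (phi_one_cont.comp ((tailProj f e k).continuous.norm)).smul
          (((f k).continuous).smul continuous_const)
      · exact (tailProj f e N).continuous
    have heq : ∀ x ∈ Metric.ball x₀ (1/2), Φ x = g x := by
      intro x hx
      have hform : ∀ n, N ≤ n →
          (∑ k ∈ Finset.range n, phi 1 ‖tailProj f e k x‖ • (f k x • e k))
          = g x - tailProj f e n x := by
        intro n hn
        have hsplit : (∑ k ∈ Finset.range n, phi 1 ‖tailProj f e k x‖ • (f k x • e k))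
            = (∑ k ∈ Finset.range N, phi 1 ‖tailProj f e k x‖ • (f k x • e k))
              + ∑ k ∈ Finset.Ico N n, phi 1 ‖tailProj f e k x‖ • (f k x • e k) := by
          rw [Finset.range_eq_Ico,
            ← Finset.sum_Ico_consecutive _ (Nat.zero_le N) hn]
          rw [Finset.range_eq_Ico]
        have hsec : (∑ k ∈ Finset.Ico N n, phi 1 ‖tailProj f e k x‖ • (f k x • e k))
            = ∑ k ∈ Finset.Ico N n, f k x • e k := by
          apply Finset.sum_congr rfl
          intro k hk
          rw [hone x hx k (Finset.mem_Ico.1 hk).1, one_smul]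
        have hIco : (∑ k ∈ Finset.Ico N n, f k x • e k)
            = tailProj f e N x - tailProj f e n x := by
          rw [Finset.sum_Ico_eq_sub _ hn, tailProj_apply, tailProj_apply]
          abel
        rw [hsplit, hsec, hIco]
        simp only [hgdef]
        rw [add_sub_assoc]
      have htt : Tendsto (fun n => g x - tailProj f e n x) atTop (𝓝 (g x)) := by
        have := (tendsto_const_nhds (x := g x) (f := atTop)).sub (hQtend x)
        simpa using this
      exact tendsto_nhds_unique (hΦ x)
        (htt.congr' (eventually_atTop.2 ⟨N, fun n hn => (hform n hn).symm⟩))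
    have hev : Φ =ᶠ[𝓝 x₀] g :=
      eventually_of_mem (Metric.ball_mem_nhds x₀ (by norm_num)) heq
    exact hg_cont.continuousAt.congr hev.symm
  -- the bound on h
  have hbound : ∀ (t : ℝ) (x : X), ‖h (t, x)‖ ≤ 4 * |t| := by
    intro t x
    rw [hdef]
    dsimp only
    split_ifs with h1 h2
    · rw [norm_smul, Real.norm_eq_abs, abs_mul, abs_two]
      calc 2 * |t| * ‖Φ ((t ^ 2)⁻¹ • x)‖ ≤ 2 * |t| * 2 :=
            mul_le_mul_of_nonneg_left (hΦ_bound _) (by positivity)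
        _ = 4 * |t| := by ring
    · rw [norm_smul, Real.norm_eq_abs, abs_mul, abs_two]
      calc 2 * |t| * ‖Φ ((t ^ 2)⁻¹ • (x - a))‖ ≤ 2 * |t| * 2 :=
            mul_le_mul_of_nonneg_left (hΦ_bound _) (by positivity)
        _ = 4 * |t| := by ring
    · simp only [norm_zero]
      positivity
  refine ⟨?_, hbound⟩
  rw [continuous_iff_continuousAt]
  rintro ⟨t, x⟩
  rcases lt_trichotomy t 0 with ht | ht | ht
  · have hopen : IsOpen {p : ℝ × X | p.1 < 0} := isOpen_lt continuous_fst continuous_const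
    have heq : h =ᶠ[𝓝 (t, x)] fun p : ℝ × X => (2 * p.1) • Φ ((p.1 ^ 2)⁻¹ • (p.2 - a)) := by
      apply eventually_of_mem (hopen.mem_nhds (by exact ht))
      intro p hp
      have hp' : p.1 < 0 := hp
      rw [hdef, if_neg (not_lt.2 (le_of_lt hp')), if_pos hp']
    have hc : ContinuousAt (fun p : ℝ × X => (2 * p.1) • Φ ((p.1 ^ 2)⁻¹ • (p.2 - a))) (t, x) := by
      apply ContinuousAt.smul
      · fun_prop
      · apply hΦ_cont.continuousAt.comp
        apply ContinuousAt.smul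
        · apply ContinuousAt.inv₀
          · fun_prop
          · exact pow_ne_zero 2 (ne_of_lt ht)
        · fun_prop
    exact hc.congr heq.symm
  · have h0 : h (t, x) = 0 := by rw [hdef, ht]; simp
    rw [ContinuousAt, h0]
    apply squeeze_zero_norm (fun p : ℝ × X => hbound p.1 p.2)
    have : Tendsto (fun p : ℝ × X => 4 * |p.1|) (𝓝 (t, x)) (𝓝 (4 * |t|)) := by
      apply Continuous.tendsto
      fun_prop
    simpa [ht] using this
  · have hopen : IsOpen {p : ℝ × X | 0 < p.1} := isOpen_lt continuous_const continuous_fst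
    have heq : h =ᶠ[𝓝 (t, x)] fun p : ℝ × X => (2 * p.1) • Φ ((p.1 ^ 2)⁻¹ • p.2) := by
      apply eventually_of_mem (hopen.mem_nhds (by exact ht))
      intro p hp
      have hp' : 0 < p.1 := hp
      rw [hdef, if_pos hp']
    have hc : ContinuousAt (fun p : ℝ × X => (2 * p.1) • Φ ((p.1 ^ 2)⁻¹ • p.2)) (t, x) := by
      apply ContinuousAt.smul
      · fun_prop
      · apply hΦ_cont.continuousAt.comp
        apply ContinuousAt.smul
        · apply ContinuousAt.inv₀
          · fun_prop
          · exact pow_ne_zero 2 (ne_of_gt ht)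
        · fun_prop
    exact hc.congr heq.symm
end

section
/- Let X be a Banach space with a Schauder basis {e_k; f_k} with ‖R_n‖ = 1 for all n, and let g_{N−1} : ℝ × X → X be continuous. Fix ε > 0, t_N ∈ ℝ, δ > 0, and (t,x) with |t − t_N| < δ. Then there exist a neighbourhood U of (t,x) in ℝ × X and K ∈ ℕ such that for all k ≥ K and (s,y) ∈ U: Q_k[g_{N−1}(s,y) + h(s−t_N, y) − Φ_{ε/4}(g_{N−1}(s,y))] = Q_k h(s−t_N, y), where Q_k = I − P_{k−1}. -/
open Filter Finset Topology

lemma tailProj_e {X : Type*} [NormedAddCommGroup X] [NormedSpace ℝ X]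
    (f : ℕ → X →L[ℝ] ℝ) (e : ℕ → X)
    (hbi : ∀ k j, f k (e j) = if k = j then (1 : ℝ) else 0)
    (n j : ℕ) : tailProj f e n (e j) = if j < n then 0 else e j := by
  simp only [tailProj, ContinuousLinearMap.coe_sub', Pi.sub_apply,
    ContinuousLinearMap.coe_id', id_eq, ContinuousLinearMap.coe_sum', Finset.sum_apply,
    ContinuousLinearMap.smulRight_apply, hbi, ite_smul, one_smul, zero_smul]
  rw [Finset.sum_ite_eq' (Finset.range n) j e]
  by_cases hj : j < n <;> simp [hj]

lemma tailProj_tailProj {X : Type*} [NormedAddCommGroup X] [NormedSpace ℝ X]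
    (f : ℕ → X →L[ℝ] ℝ) (e : ℕ → X)
    (hbi : ∀ k j, f k (e j) = if k = j then (1 : ℝ) else 0)
    {K j : ℕ} (hKj : K ≤ j) (z : X) :
    tailProj f e j (tailProj f e K z) = tailProj f e j z := by
  have : tailProj f e K z = z - ∑ i ∈ Finset.range K, f i z • e i := by
    simp [tailProj]
  rw [this, map_sub, map_sum]
  have : ∀ i ∈ Finset.range K, tailProj f e j (f i z • e i) = 0 := by
    intro i hi
    rw [map_smul, tailProj_e f e hbi]
    have : i < j := lt_of_lt_of_le (Finset.mem_range.mp hi) hKj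
    simp [this]
  rw [Finset.sum_congr rfl this]
  simp

lemma tail_cancel_key {X : Type*} [NormedAddCommGroup X] [NormedSpace ℝ X]
    (e : ℕ → X) (f : ℕ → X →L[ℝ] ℝ)
    (hexp : ∀ x : X, Tendsto (fun n => ∑ k ∈ Finset.range n, f k x • e k) atTop (𝓝 x))
    (hbi : ∀ k j, f k (e j) = if k = j then (1 : ℝ) else 0)
    (hR : ∀ n, 1 ≤ n → ‖tailProj f e n‖ = 1)
    (ε : ℝ) (Φ : X → X)
    (hΦ : ∀ z : X, Tendsto
      (fun n => ∑ k ∈ Finset.range n, phi (ε / 4) ‖tailProj f e k z‖ • (f k z • e k))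
      atTop (𝓝 (Φ z)))
    (z : X) (K : ℕ) (hK1 : 1 ≤ K) (hKz : ‖tailProj f e K z‖ ≤ ε / 4)
    (k : ℕ) (hk : K ≤ k) :
    tailProj f e k (Φ z) = tailProj f e k z := by
  have h1 : Tendsto (fun n => tailProj f e k
      (∑ j ∈ Finset.range n, phi (ε / 4) ‖tailProj f e j z‖ • (f j z • e j)))
      atTop (𝓝 (tailProj f e k (Φ z))) :=
    ((tailProj f e k).continuous.tendsto _).comp (hΦ z)
  have h2 : Tendsto (fun n => tailProj f e k (∑ j ∈ Finset.range n, f j z • e j))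
      atTop (𝓝 (tailProj f e k z)) :=
    ((tailProj f e k).continuous.tendsto _).comp (hexp z)
  have heq : (fun n => tailProj f e k
      (∑ j ∈ Finset.range n, phi (ε / 4) ‖tailProj f e j z‖ • (f j z • e j)))
      = fun n => tailProj f e k (∑ j ∈ Finset.range n, f j z • e j) := by
    funext n
    rw [map_sum, map_sum]
    apply Finset.sum_congr rfl
    intro j _
    simp only [map_smul]
    rcases lt_or_ge j k with hjk | hjk
    · rw [tailProj_e f e hbi]
      simp [hjk]
    · have hKj : K ≤ j := le_trans hk hjk
      have hnorm : ‖tailProj f e j z‖ ≤ ε / 4 := by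
        rw [← tailProj_tailProj f e hbi hKj z]
        calc ‖tailProj f e j (tailProj f e K z)‖
            ≤ ‖tailProj f e j‖ * ‖tailProj f e K z‖ := (tailProj f e j).le_opNorm _
          _ = ‖tailProj f e K z‖ := by rw [hR j (le_trans hK1 hKj), one_mul]
          _ ≤ ε / 4 := hKz
      have : phi (ε / 4) ‖tailProj f e j z‖ = 1 := by
        simp [phi, abs_of_nonneg (norm_nonneg _), hnorm]
      rw [this, one_smul]
  rw [heq] at h1
  exact tendsto_nhds_unique h1 h2

/-- In tail coordinates, the `Φ_{ε/4}` term cancels the `g_{N-1}` term: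
locally around `(t,x)` with `|t - t_N| < δ`, for all large `k`,
`Q_k [g(s,y) + h(s - t_N, y) - Φ_{ε/4}(g(s,y))] = Q_k h(s - t_N, y)`. -/
theorem tail_cancellation
    {X : Type*} [NormedAddCommGroup X] [NormedSpace ℝ X] [CompleteSpace X]
    (e : ℕ → X) (f : ℕ → X →L[ℝ] ℝ)
    (hexp : ∀ x : X, Tendsto (fun n => ∑ k ∈ Finset.range n, f k x • e k) atTop (𝓝 x))
    (hbi : ∀ k j, f k (e j) = if k = j then (1 : ℝ) else 0)
    (hR : ∀ n, 1 ≤ n → ‖tailProj f e n‖ = 1)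
    (g h : ℝ × X → X) (hg : Continuous g)
    (ε : ℝ) (hε : 0 < ε)
    (Φ : X → X)
    (hΦ : ∀ z : X, Tendsto
      (fun n => ∑ k ∈ Finset.range n, phi (ε / 4) ‖tailProj f e k z‖ • (f k z • e k))
      atTop (𝓝 (Φ z)))
    (tN δ t : ℝ) (hδ : 0 < δ) (x : X) (ht : |t - tN| < δ) :
    ∃ U ∈ 𝓝 ((t, x) : ℝ × X), ∃ K : ℕ, ∀ k, K ≤ k → ∀ p ∈ U,
      tailProj f e k (g p + h (p.1 - tN, p.2) - Φ (g p)) =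
        tailProj f e k (h (p.1 - tN, p.2)) := by
  -- tail projections of the fixed point tend to 0
  have htail : Tendsto (fun n => tailProj f e n (g (t, x))) atTop (𝓝 0) := by
    have : (fun n => tailProj f e n (g (t, x)))
        = fun n => g (t, x) - ∑ k ∈ Finset.range n, f k (g (t, x)) • e k := by
      funext n; simp [tailProj]
    rw [this]
    have h0 : Tendsto (fun n => g (t, x) - ∑ k ∈ Finset.range n, f k (g (t, x)) • e k)
        atTop (𝓝 (g (t, x) - g (t, x))) := Tendsto.sub tendsto_const_nhds (hexp _)
    simpa using h0
  have hε4 : (0 : ℝ) < ε / 4 := by linarith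
  obtain ⟨N, hN⟩ := (Metric.tendsto_atTop.mp htail) (ε / 4) hε4
  set K := max N 1 with hKdef
  have hK1 : 1 ≤ K := le_max_right _ _
  have hKx : ‖tailProj f e K (g (t, x))‖ < ε / 4 := by
    simpa [dist_eq_norm] using hN K (le_max_left _ _)
  refine ⟨{p : ℝ × X | ‖tailProj f e K (g p)‖ < ε / 4}, ?_, K, ?_⟩
  · have hco : Continuous fun p : ℝ × X => ‖tailProj f e K (g p)‖ :=
      ((tailProj f e K).continuous.comp hg).norm
    exact (hco.isOpen_preimage _ isOpen_Iio).mem_nhds hKx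
  · intro k hk p hp
    have hcancel : tailProj f e k (Φ (g p)) = tailProj f e k (g p) :=
      tail_cancel_key e f hexp hbi hR ε Φ hΦ (g p) K hK1 (le_of_lt hp) k hk
    rw [map_sub, map_add, hcancel]
    abel
end
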